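/- Let 𝔰𝔎_r be the unital associative ℂ-algebra generated by S₀, S₃, S₊, S₋ subject to the relations [S₀,S₋] = −2{S₋,S₋}, [S₀,S₊] = 16{S₃,S₋} − 16{S₋,S₋} + 2{S₊,S₋} − 4{S₃,S₃}, [S₊,S₋] = 2{S₀,S₃}, [S₀,S₃] = 2{S₃,S₋} − 8{S₋,S₋}, [S₃,S₊] = {S₀,S₊}, [S₃,S₋] = −{S₀,S₋}. Then the elements C₁ = S₀² + S₃² + ½{S₊,S₋} and C₂ = ½{S₊,S₋} + 2{S₋,S₃} + S₃² − 6{S₋,S₋} are central in 𝔰𝔎_r, i.e. they commute with each of S₀, S₃, S₊, S₋. -/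
import Mathlib


noncomputable section

/-- The free algebra on the four generators S₀, S₃, S₊, S₋. -/
abbrev FreeSk := FreeAlgebra ℂ (Fin 4)

namespace Sk

def S0 : FreeSk := FreeAlgebra.ι ℂ 0
def S3 : FreeSk := FreeAlgebra.ι ℂ 1
def Sp : FreeSk := FreeAlgebra.ι ℂ 2
def Sm : FreeSk := FreeAlgebra.ι ℂ 3

/-- Commutator [a,b] = ab − ba. -/
def com (a b : FreeSk) : FreeSk := a * b - b * a

/-- Anticommutator {a,b} = ab + ba. -/
def acom (a b : FreeSk) : FreeSk := a * b + b * a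

/-- The six defining relations of the rational degenerate Sklyanin algebra. -/
inductive Rel : FreeSk → FreeSk → Prop
  | r1 : Rel (com S0 Sm) (-(2 * acom Sm Sm))
  | r2 : Rel (com S0 Sp)
      (16 * acom S3 Sm - 16 * acom Sm Sm + 2 * acom Sp Sm - 4 * acom S3 S3)
  | r3 : Rel (com Sp Sm) (2 * acom S0 S3)
  | r4 : Rel (com S0 S3) (2 * acom S3 Sm - 8 * acom Sm Sm)
  | r5 : Rel (com S3 Sp) (acom S0 Sp)
  | r6 : Rel (com S3 Sm) (-(acom S0 Sm))

end Sk

/-- The rational degenerate Sklyanin algebra 𝔰𝔎_r. -/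
abbrev SklyaninR := RingQuot Sk.Rel

section Generic
variable {A : Type*} [Ring A] [Algebra ℂ A]

lemma aux_smul8 (x : A) : (1/8 : ℂ) • ((8 : A) * x) = x := by
  rw [show (8 : A) = algebraMap ℂ A (8 : ℂ) from (map_ofNat _ 8).symm,
    ← Algebra.smul_def, smul_smul]
  norm_num

lemma aux_smul4 (x : A) : (1/8 : ℂ) • ((4 : A) * x) = (1/2 : ℂ) • x := by
  rw [show (4 : A) = algebraMap ℂ A (4 : ℂ) from (map_ofNat _ 4).symm,
    ← Algebra.smul_def, smul_smul]
  norm_num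

set_option maxHeartbeats 3200000 in
lemma aux_main (s0 s3 sp sm : A)
    (h1 : s0*sm - sm*s0 = -(2*(sm*sm + sm*sm)))
    (h2 : s0*sp - sp*s0 = 16*(s3*sm + sm*s3) - 16*(sm*sm + sm*sm) + 2*(sp*sm + sm*sp) - 4*(s3*s3 + s3*s3))
    (h3 : sp*sm - sm*sp = 2*(s0*s3 + s3*s0))
    (h4 : s0*s3 - s3*s0 = 2*(s3*sm + sm*s3) - 8*(sm*sm + sm*sm))
    (h5 : s3*sp - sp*s3 = s0*sp + sp*s0)
    (h6 : s3*sm - sm*s3 = -(s0*sm + sm*s0)) :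
    (Commute (s0 ^ 2 + s3 ^ 2 + (1 / 2 : ℂ) • (sp * sm + sm * sp)) s0 ∧
     Commute (s0 ^ 2 + s3 ^ 2 + (1 / 2 : ℂ) • (sp * sm + sm * sp)) s3 ∧
     Commute (s0 ^ 2 + s3 ^ 2 + (1 / 2 : ℂ) • (sp * sm + sm * sp)) sp ∧
     Commute (s0 ^ 2 + s3 ^ 2 + (1 / 2 : ℂ) • (sp * sm + sm * sp)) sm) ∧
    (Commute ((1 / 2 : ℂ) • (sp * sm + sm * sp) + 2 * (sm * s3 + s3 * sm) + s3 ^ 2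
        - 6 * (sm * sm + sm * sm)) s0 ∧
     Commute ((1 / 2 : ℂ) • (sp * sm + sm * sp) + 2 * (sm * s3 + s3 * sm) + s3 ^ 2
        - 6 * (sm * sm + sm * sm)) s3 ∧
     Commute ((1 / 2 : ℂ) • (sp * sm + sm * sp) + 2 * (sm * s3 + s3 * sm) + s3 ^ 2
        - 6 * (sm * sm + sm * sm)) sp ∧
     Commute ((1 / 2 : ℂ) • (sp * sm + sm * sp) + 2 * (sm * s3 + s3 * sm) + s3 ^ 2
        - 6 * (sm * sm + sm * sm)) sm) := by
  have z1 : s0*sm - sm*s0 + 4*(sm*sm) = 0 := by rw [h1]; noncomm_ring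
  have z2 : s0*sp - sp*s0 - 16*(s3*sm + sm*s3) + 32*(sm*sm) - 2*(sp*sm + sm*sp) + 8*(s3*s3) = 0 := by
    rw [h2]; noncomm_ring
  have z3 : sp*sm - sm*sp - 2*(s0*s3 + s3*s0) = 0 := by rw [h3]; noncomm_ring
  have z4 : s0*s3 - s3*s0 - 2*(s3*sm + sm*s3) + 16*(sm*sm) = 0 := by rw [h4]; noncomm_ring
  have z5 : s3*sp - sp*s3 - (s0*sp + sp*s0) = 0 := by rw [h5]; noncomm_ring
  have z6 : s3*sm - sm*s3 + (s0*sm + sm*s0) = 0 := by rw [h6]; abel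
  have key10 : (8*(s0*s0) + 8*(s3*s3) + 4*(sp*sm + sm*sp)) * s0 - s0 * (8*(s0*s0) + 8*(s3*s3) + 4*(sp*sm + sm*sp)) =
      24 * ((s0*sm - sm*s0 + 4*(sm*sm)) * s3) + 6 * ((s0*sm - sm*s0 + 4*(sm*sm)) * sp) - 24 * (s3 * (s0*sm - sm*s0 + 4*(sm*sm))) - 6 * (sp * (s0*sm - sm*s0 + 4*(sm*sm))) + 2 * ((s0*sp - sp*s0 - 16*(s3*sm + sm*s3) + 32*(sm*sm) - 2*(sp*sm + sm*sp) + 8*(s3*s3)) * s0) + 2 * ((s0*sp - sp*s0 - 16*(s3*sm + sm*s3) + 32*(sm*sm) - 2*(sp*sm + sm*sp) + 8*(s3*s3)) * s3) - 2 * ((s0*sp - sp*s0 - 16*(s3*sm + sm*s3) + 32*(sm*sm) - 2*(sp*sm + sm*sp) + 8*(s3*s3)) * sm) + 2 * (s0 * (s0*sp - sp*s0 - 16*(s3*sm + sm*s3) + 32*(sm*sm) - 2*(sp*sm + sm*sp) + 8*(s3*s3))) - 2 * (s3 * (s0*sp - sp*s0 - 16*(s3*sm + sm*s3) + 32*(sm*sm)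 - 2*(sp*sm + sm*sp) + 8*(s3*s3))) + 2 * (sm * (s0*sp - sp*s0 - 16*(s3*sm + sm*s3) + 32*(sm*sm) - 2*(sp*sm + sm*sp) + 8*(s3*s3))) + 2 * ((sp*sm - sm*sp - 2*(s0*s3 + s3*s0)) * s0) + 8 * ((sp*sm - sm*sp - 2*(s0*s3 + s3*s0)) * s3) - 12 * ((sp*sm - sm*sp - 2*(s0*s3 + s3*s0)) * sm) - 2 * (s0 * (sp*sm - sm*sp - 2*(s0*s3 + s3*s0))) - 12 * (sm * (sp*sm - sm*sp - 2*(s0*s3 + s3*s0))) - 4 * ((s0*s3 - s3*s0 - 2*(s3*sm + sm*s3) + 16*(sm*sm)) * s0) - 8 * ((s0*s3 - s3*s0 - 2*(s3*sm + sm*s3) + 16*(sm*sm)) * s3) - 2 * ((s0*s3 - s3*s0 - 2*(s3*sm + sm*s3) + 16*(sm*sm)) * sp) - 4 * (s0 * (s0*s3 - s3*s0 - 2*(s3*sm + sm*s3) + 16*(sm*sm))) + 8 * (s3 * (s0*s3 - s3*s0 - 2*(s3*sm + sm*s3) + 16*(sm*sm))) + 2 * (sp * (s0*s3 - s3*s0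 - 2*(s3*sm + sm*s3) + 16*(sm*sm))) - 2 * ((s3*sp - sp*s3 - (s0*sp + sp*s0)) * s0) - 4 * ((s3*sp - sp*s3 - (s0*sp + sp*s0)) * sm) + 2 * (s0 * (s3*sp - sp*s3 - (s0*sp + sp*s0))) - 12 * (sm * (s3*sp - sp*s3 - (s0*sp + sp*s0))) - 8 * ((s3*sm - sm*s3 + (s0*sm + sm*s0)) * sp) := by noncomm_ring
  rw [z1, z2, z3, z4, z5, z6] at key10
  simp only [mul_zero, zero_mul, add_zero, zero_add, sub_zero, neg_zero, smul_zero, mul_one] at key10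
  have c10 : Commute (8*(s0*s0) + 8*(s3*s3) + 4*(sp*sm + sm*sp)) s0 := sub_eq_zero.mp key10
  have key13 : (8*(s0*s0) + 8*(s3*s3) + 4*(sp*sm + sm*sp)) * s3 - s3 * (8*(s0*s0) + 8*(s3*s3) + 4*(sp*sm + sm*sp)) =
      -24 * ((s0*sm - sm*s0 + 4*(sm*sm)) * s3) - 6 * ((s0*sm - sm*s0 + 4*(sm*sm)) * sp) + 24 * (s3 * (s0*sm - sm*s0 + 4*(sm*sm))) + 6 * (sp * (s0*sm - sm*s0 + 4*(sm*sm))) - 2 * ((s0*sp - sp*s0 - 16*(s3*sm + sm*s3) + 32*(sm*sm) - 2*(sp*sm + sm*sp) + 8*(s3*s3)) * s0) - 2 * ((s0*sp - sp*s0 - 16*(s3*sm + sm*s3) + 32*(sm*sm) - 2*(sp*sm + sm*sp) + 8*(s3*s3)) * s3) + 2 * ((s0*sp - sp*s0 - 16*(s3*sm + sm*s3) + 32*(sm*sm) - 2*(sp*sm + sm*sp) + 8*(s3*s3)) * sm) - 2 * (s0 * (s0*sp - sp*s0 - 16*(s3*sm + sm*s3) + 32*(sm*sm) - 2*(sp*sm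 + sm*sp) + 8*(s3*s3))) + 2 * (s3 * (s0*sp - sp*s0 - 16*(s3*sm + sm*s3) + 32*(sm*sm) - 2*(sp*sm + sm*sp) + 8*(s3*s3))) - 2 * (sm * (s0*sp - sp*s0 - 16*(s3*sm + sm*s3) + 32*(sm*sm) - 2*(sp*sm + sm*sp) + 8*(s3*s3))) + 2 * ((sp*sm - sm*sp - 2*(s0*s3 + s3*s0)) * s0) - 4 * ((sp*sm - sm*sp - 2*(s0*s3 + s3*s0)) * s3) + 12 * ((sp*sm - sm*sp - 2*(s0*s3 + s3*s0)) * sm) - 2 * (s0 * (sp*sm - sm*sp - 2*(s0*s3 + s3*s0))) - 4 * (s3 * (sp*sm - sm*sp - 2*(s0*s3 + s3*s0))) + 12 * (sm * (sp*sm - sm*sp - 2*(s0*s3 + s3*s0))) + 4 * ((s0*s3 - s3*s0 - 2*(s3*sm + sm*s3) + 16*(sm*sm)) * s0) + 8 * ((s0*s3 - s3*s0 - 2*(s3*sm + sm*s3) + 16*(sm*sm)) * s3) + 2 * ((s0*s3 - s3*s0 - 2*(s3*sm + sm*s3) + 16*(sm*sm)) * sp) + 4 * (s0 * (s0*s3 -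 s3*s0 - 2*(s3*sm + sm*s3) + 16*(sm*sm))) - 8 * (s3 * (s0*s3 - s3*s0 - 2*(s3*sm + sm*s3) + 16*(sm*sm))) - 2 * (sp * (s0*s3 - s3*s0 - 2*(s3*sm + sm*s3) + 16*(sm*sm))) + 2 * ((s3*sp - sp*s3 - (s0*sp + sp*s0)) * s0) + 4 * ((s3*sp - sp*s3 - (s0*sp + sp*s0)) * sm) - 2 * (s0 * (s3*sp - sp*s3 - (s0*sp + sp*s0))) + 4 * (sm * (s3*sp - sp*s3 - (s0*sp + sp*s0))) := by noncomm_ring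
  rw [z1, z2, z3, z4, z5] at key13
  simp only [mul_zero, zero_mul, add_zero, zero_add, sub_zero, neg_zero, smul_zero, mul_one] at key13
  have c13 : Commute (8*(s0*s0) + 8*(s3*s3) + 4*(sp*sm + sm*sp)) s3 := sub_eq_zero.mp key13
  have key1p : (8*(s0*s0) + 8*(s3*s3) + 4*(sp*sm + sm*sp)) * sp - sp * (8*(s0*s0) + 8*(s3*s3) + 4*(sp*sm + sm*sp)) =
      -4 * ((sp*sm - sm*sp - 2*(s0*s3 + s3*s0)) * sp) - 4 * (sp * (sp*sm - sm*sp - 2*(s0*s3 + s3*s0))) + 8 * ((s3*sp - sp*s3 - (s0*sp + sp*s0)) * s0) + 8 * ((s3*sp - sp*s3 - (s0*sp + sp*s0)) * s3) - 8 * (s0 * (s3*sp - sp*s3 - (s0*sp + sp*s0))) + 8 * (s3 * (s3*sp - sp*s3 - (s0*sp + sp*s0))) := by noncomm_ring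
  rw [z3, z5] at key1p
  simp only [mul_zero, zero_mul, add_zero, zero_add, sub_zero, neg_zero, smul_zero, mul_one] at key1p
  have c1p : Commute (8*(s0*s0) + 8*(s3*s3) + 4*(sp*sm + sm*sp)) sp := sub_eq_zero.mp key1p
  have key1m : (8*(s0*s0) + 8*(s3*s3) + 4*(sp*sm + sm*sp)) * sm - sm * (8*(s0*s0) + 8*(s3*s3) + 4*(sp*sm + sm*sp)) =
      8 * ((s0*sm - sm*s0 + 4*(sm*sm)) * s0) - 4 * ((s0*sm - sm*s0 + 4*(sm*sm)) * s3) - 1 * ((s0*sm - sm*s0 + 4*(sm*sm)) * sp) + 8 * (s0 * (s0*sm - sm*s0 + 4*(sm*sm))) + 4 * (s3 * (s0*sm - sm*s0 + 4*(sm*sm))) + 1 * (sp * (s0*sm - sm*s0 + 4*(sm*sm))) + 1 * ((s0*sp - sp*s0 - 16*(s3*sm + sm*s3) + 32*(sm*sm) - 2*(sp*sm + sm*sp) + 8*(s3*s3)) * sm) - 1 * (sm * (s0*sp - sp*s0 - 16*(s3*sm + sm*s3) + 32*(sm*sm) - 2*(sp*sm + sm*sp) + 8*(s3*s3))) + 1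 * ((sp*sm - sm*sp - 2*(s0*s3 + s3*s0)) * s0) + 2 * ((sp*sm - sm*sp - 2*(s0*s3 + s3*s0)) * sm) - 1 * (s0 * (sp*sm - sm*sp - 2*(s0*s3 + s3*s0))) + 2 * (sm * (sp*sm - sm*sp - 2*(s0*s3 + s3*s0))) - 2 * ((s0*s3 - s3*s0 - 2*(s3*sm + sm*s3) + 16*(sm*sm)) * s0) - 2 * (s0 * (s0*s3 - s3*s0 - 2*(s3*sm + sm*s3) + 16*(sm*sm))) := by noncomm_ring
  rw [z1, z2, z3, z4] at key1m
  simp only [mul_zero, zero_mul, add_zero, zero_add, sub_zero, neg_zero, smul_zero, mul_one] at key1m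
  have c1m : Commute (8*(s0*s0) + 8*(s3*s3) + 4*(sp*sm + sm*sp)) sm := sub_eq_zero.mp key1m
  have key20 : (4*(sp*sm + sm*sp) + 8*(2*(sm*s3 + s3*sm)) + 8*(s3*s3) - 8*(6*(sm*sm + sm*sm))) * s0 - s0 * (4*(sp*sm + sm*sp) + 8*(2*(sm*s3 + s3*sm)) + 8*(s3*s3) - 8*(6*(sm*sm + sm*sm))) =
      -16 * ((s0*sm - sm*s0 + 4*(sm*sm)) * s0) + 24 * ((s0*sm - sm*s0 + 4*(sm*sm)) * s3) + 18 * ((s0*sm - sm*s0 + 4*(sm*sm)) * sp) + 96 * ((s0*sm - sm*s0 + 4*(sm*sm)) * sm) - 16 * (s0 * (s0*sm - sm*s0 + 4*(sm*sm))) - 88 * (s3 * (s0*sm - sm*s0 + 4*(sm*sm))) - 10 * (sp * (s0*sm - sm*s0 + 4*(sm*sm))) + 96 * (sm * (s0*sm - sm*s0 + 4*(sm*sm))) + 4 * ((s0*sp - sp*s0 - 16*(s3*sm + sm*s3) + 32*(sm*sm) - 2*(sp*sm + sm*sp) + 8*(s3*s3)) * s0) + 4 * ((s0*sp - sp*s0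 - 16*(s3*sm + sm*s3) + 32*(sm*sm) - 2*(sp*sm + sm*sp) + 8*(s3*s3)) * s3) - 2 * ((s0*sp - sp*s0 - 16*(s3*sm + sm*s3) + 32*(sm*sm) - 2*(sp*sm + sm*sp) + 8*(s3*s3)) * sm) + 4 * (s0 * (s0*sp - sp*s0 - 16*(s3*sm + sm*s3) + 32*(sm*sm) - 2*(sp*sm + sm*sp) + 8*(s3*s3))) - 4 * (s3 * (s0*sp - sp*s0 - 16*(s3*sm + sm*s3) + 32*(sm*sm) - 2*(sp*sm + sm*sp) + 8*(s3*s3))) + 10 * (sm * (s0*sp - sp*s0 - 16*(s3*sm + sm*s3) + 32*(sm*sm) - 2*(sp*sm + sm*sp) + 8*(s3*s3))) + 2 * ((sp*sm - sm*sp - 2*(s0*s3 + s3*s0)) * s0) + 16 * ((sp*sm - sm*sp - 2*(s0*s3 + s3*s0)) * s3) - 28 * ((sp*sm - sm*sp - 2*(s0*s3 + s3*s0)) * sm) - 2 * (s0 * (sp*sm - sm*sp - 2*(s0*s3 + s3*s0))) - 12 * (sm * (sp*sm - sm*sp - 2*(s0*s3 + s3*s0))) - 4 * ((s0*s3 - s3*s0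 - 2*(s3*sm + sm*s3) + 16*(sm*sm)) * s0) - 8 * ((s0*s3 - s3*s0 - 2*(s3*sm + sm*s3) + 16*(sm*sm)) * s3) - 4 * ((s0*s3 - s3*s0 - 2*(s3*sm + sm*s3) + 16*(sm*sm)) * sp) - 32 * ((s0*s3 - s3*s0 - 2*(s3*sm + sm*s3) + 16*(sm*sm)) * sm) - 4 * (s0 * (s0*s3 - s3*s0 - 2*(s3*sm + sm*s3) + 16*(sm*sm))) + 24 * (s3 * (s0*s3 - s3*s0 - 2*(s3*sm + sm*s3) + 16*(sm*sm))) + 4 * (sp * (s0*s3 - s3*s0 - 2*(s3*sm + sm*s3) + 16*(sm*sm))) - 32 * (sm * (s0*s3 - s3*s0 - 2*(s3*sm + sm*s3) + 16*(sm*sm))) - 4 * ((s3*sp - sp*s3 - (s0*sp + sp*s0)) * s0) - 8 * ((s3*sp - sp*s3 - (s0*sp + sp*s0)) * sm) + 4 * (s0 * (s3*sp - sp*s3 - (s0*sp + sp*s0))) - 24 * (sm * (s3*sp - sp*s3 - (s0*sp + sp*s0))) - 16 * ((s3*sm - sm*s3 + (s0*sm + sm*s0)) * s0) + 32 * ((s3*sm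 - sm*s3 + (s0*sm + sm*s0)) * s3) - 16 * ((s3*sm - sm*s3 + (s0*sm + sm*s0)) * sp) + 16 * (s0 * (s3*sm - sm*s3 + (s0*sm + sm*s0))) := by noncomm_ring
  rw [z1, z2, z3, z4, z5, z6] at key20
  simp only [mul_zero, zero_mul, add_zero, zero_add, sub_zero, neg_zero, smul_zero, mul_one] at key20
  have c20 : Commute (4*(sp*sm + sm*sp) + 8*(2*(sm*s3 + s3*sm)) + 8*(s3*s3) - 8*(6*(sm*sm + sm*sm))) s0 := sub_eq_zero.mp key20
  have key23 : (4*(sp*sm + sm*sp) + 8*(2*(sm*s3 + s3*sm)) + 8*(s3*s3) - 8*(6*(sm*sm + sm*sm))) * s3 - s3 * (4*(sp*sm + sm*sp) + 8*(2*(sm*s3 + s3*sm)) + 8*(s3*s3) - 8*(6*(sm*sm + sm*sm))) =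
      16 * ((s0*sm - sm*s0 + 4*(sm*sm)) * s0) - 48 * ((s0*sm - sm*s0 + 4*(sm*sm)) * s3) - 4 * ((s0*sm - sm*s0 + 4*(sm*sm)) * sp) + 16 * (s0 * (s0*sm - sm*s0 + 4*(sm*sm))) + 48 * (s3 * (s0*sm - sm*s0 + 4*(sm*sm))) + 4 * (sp * (s0*sm - sm*s0 + 4*(sm*sm))) - 2 * ((s0*sp - sp*s0 - 16*(s3*sm + sm*s3) + 32*(sm*sm) - 2*(sp*sm + sm*sp) + 8*(s3*s3)) * s0) - 2 * ((s0*sp - sp*s0 - 16*(s3*sm + sm*s3) + 32*(sm*sm) - 2*(sp*sm + sm*sp) + 8*(s3*s3)) * s3) - 2 * (s0 * (s0*sp - sp*s0 - 16*(s3*sm + sm*s3) + 32*(sm*sm) - 2*(sp*sm + sm*sp) + 8*(s3*s3))) + 2 * (s3 * (s0*sp - sp*s0 - 16*(s3*sm + sm*s3) + 32*(sm*sm) - 2*(sp*sm + sm*sp) + 8*(s3*s3))) - 4 * ((sp*sm - sm*sp - 2*(s0*s3 + s3*s0)) * s3) + 16 * ((sp*sm - sm*sp - 2*(s0*s3 +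 s3*s0)) * sm) - 4 * (s3 * (sp*sm - sm*sp - 2*(s0*s3 + s3*s0))) + 16 * (sm * (sp*sm - sm*sp - 2*(s0*s3 + s3*s0))) + 8 * ((s0*s3 - s3*s0 - 2*(s3*sm + sm*s3) + 16*(sm*sm)) * s3) + 2 * ((s0*s3 - s3*s0 - 2*(s3*sm + sm*s3) + 16*(sm*sm)) * sp) + 16 * ((s0*s3 - s3*s0 - 2*(s3*sm + sm*s3) + 16*(sm*sm)) * sm) - 8 * (s3 * (s0*s3 - s3*s0 - 2*(s3*sm + sm*s3) + 16*(sm*sm))) - 2 * (sp * (s0*s3 - s3*s0 - 2*(s3*sm + sm*s3) + 16*(sm*sm))) - 16 * (sm * (s0*s3 - s3*s0 - 2*(s3*sm + sm*s3) + 16*(sm*sm))) + 2 * ((s3*sp - sp*s3 - (s0*sp + sp*s0)) * s0) + 4 * ((s3*sp - sp*s3 - (s0*sp + sp*s0)) * sm) - 2 * (s0 * (s3*sp - sp*s3 - (s0*sp + sp*s0))) + 4 * (sm * (s3*sp - sp*s3 - (s0*sp + sp*s0))) + 16 * ((s3*sm - sm*s3 + (s0*sm + sm*s0)) * s0) - 16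 * (s0 * (s3*sm - sm*s3 + (s0*sm + sm*s0))) := by noncomm_ring
  rw [z1, z2, z3, z4, z5, z6] at key23
  simp only [mul_zero, zero_mul, add_zero, zero_add, sub_zero, neg_zero, smul_zero, mul_one] at key23
  have c23 : Commute (4*(sp*sm + sm*sp) + 8*(2*(sm*s3 + s3*sm)) + 8*(s3*s3) - 8*(6*(sm*sm + sm*sm))) s3 := sub_eq_zero.mp key23
  have key2p : (4*(sp*sm + sm*sp) + 8*(2*(sm*s3 + s3*sm)) + 8*(s3*s3) - 8*(6*(sm*sm + sm*sm))) * sp - sp * (4*(sp*sm + sm*sp) + 8*(2*(sm*s3 + s3*sm)) + 8*(s3*s3) - 8*(6*(sm*sm + sm*sm))) =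
      -96 * ((s0*sm - sm*s0 + 4*(sm*sm)) * s3) - 8 * ((s0*sm - sm*s0 + 4*(sm*sm)) * sp) + 96 * (s3 * (s0*sm - sm*s0 + 4*(sm*sm))) + 8 * (sp * (s0*sm - sm*s0 + 4*(sm*sm))) - 8 * ((s0*sp - sp*s0 - 16*(s3*sm + sm*s3) + 32*(sm*sm) - 2*(sp*sm + sm*sp) + 8*(s3*s3)) * s0) - 8 * ((s0*sp - sp*s0 - 16*(s3*sm + sm*s3) + 32*(sm*sm) - 2*(sp*sm + sm*sp) + 8*(s3*s3)) * sm) - 8 * (s0 * (s0*sp - sp*s0 - 16*(s3*sm + sm*s3) + 32*(sm*sm) - 2*(sp*sm + sm*sp) + 8*(s3*s3))) + 8 * (sm * (s0*sp - sp*s0 - 16*(s3*sm + sm*s3) + 32*(sm*sm) - 2*(sp*sm + sm*sp) + 8*(s3*s3))) - 8 * ((sp*sm - sm*sp - 2*(s0*s3 + s3*s0)) * s0) - 16 * ((sp*sm - sm*sp - 2*(s0*s3 + s3*s0)) * s3) - 4 * ((sp*sm - sm*sp - 2*(s0*s3 + s3*s0)) * sp) + 48 * ((sp*sm - sm*sp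 - 2*(s0*s3 + s3*s0)) * sm) + 8 * (s0 * (sp*sm - sm*sp - 2*(s0*s3 + s3*s0))) - 16 * (s3 * (sp*sm - sm*sp - 2*(s0*s3 + s3*s0))) - 4 * (sp * (sp*sm - sm*sp - 2*(s0*s3 + s3*s0))) + 48 * (sm * (sp*sm - sm*sp - 2*(s0*s3 + s3*s0))) + 16 * ((s0*s3 - s3*s0 - 2*(s3*sm + sm*s3) + 16*(sm*sm)) * s0) + 32 * ((s0*s3 - s3*s0 - 2*(s3*sm + sm*s3) + 16*(sm*sm)) * s3) + 16 * (s0 * (s0*s3 - s3*s0 - 2*(s3*sm + sm*s3) + 16*(sm*sm))) - 32 * (s3 * (s0*s3 - s3*s0 - 2*(s3*sm + sm*s3) + 16*(sm*sm))) + 8 * ((s3*sp - sp*s3 - (s0*sp + sp*s0)) * s0) + 8 * ((s3*sp - sp*s3 - (s0*sp + sp*s0)) * s3) + 16 * ((s3*sp - sp*s3 - (s0*sp + sp*s0)) * sm) - 8 * (s0 * (s3*sp - sp*s3 - (s0*sp + sp*s0))) + 8 * (s3 * (s3*sp - sp*s3 - (s0*sp + sp*s0))) + 16 * (sm * (s3*sp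 - sp*s3 - (s0*sp + sp*s0))) := by noncomm_ring
  rw [z1, z2, z3, z4, z5] at key2p
  simp only [mul_zero, zero_mul, add_zero, zero_add, sub_zero, neg_zero, smul_zero, mul_one] at key2p
  have c2p : Commute (4*(sp*sm + sm*sp) + 8*(2*(sm*s3 + s3*sm)) + 8*(s3*s3) - 8*(6*(sm*sm + sm*sm))) sp := sub_eq_zero.mp key2p
  have key2m : (4*(sp*sm + sm*sp) + 8*(2*(sm*s3 + s3*sm)) + 8*(s3*s3) - 8*(6*(sm*sm + sm*sm))) * sm - sm * (4*(sp*sm + sm*sp) + 8*(2*(sm*s3 + s3*sm)) + 8*(s3*s3) - 8*(6*(sm*sm + sm*sm))) =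
      8 * ((s0*sm - sm*s0 + 4*(sm*sm)) * s0) - 12 * ((s0*sm - sm*s0 + 4*(sm*sm)) * s3) - 1 * ((s0*sm - sm*s0 + 4*(sm*sm)) * sp) + 8 * (s0 * (s0*sm - sm*s0 + 4*(sm*sm))) + 12 * (s3 * (s0*sm - sm*s0 + 4*(sm*sm))) + 1 * (sp * (s0*sm - sm*s0 + 4*(sm*sm))) + 1 * ((s0*sp - sp*s0 - 16*(s3*sm + sm*s3) + 32*(sm*sm) - 2*(sp*sm + sm*sp) + 8*(s3*s3)) * sm) - 1 * (sm * (s0*sp - sp*s0 - 16*(s3*sm + sm*s3) + 32*(sm*sm) - 2*(sp*sm + sm*sp) + 8*(s3*s3))) + 1 * ((sp*sm - sm*sp - 2*(s0*s3 + s3*s0)) * s0) + 2 * ((sp*sm - sm*sp - 2*(s0*s3 + s3*s0)) * sm) - 1 * (s0 * (sp*sm - sm*sp - 2*(s0*s3 + s3*s0))) + 2 * (sm * (sp*sm - sm*sp - 2*(s0*s3 + s3*s0))) - 2 * ((s0*s3 - s3*s0 - 2*(s3*sm + sm*s3) + 16*(sm*sm)) * s0) + 8 * ((s0*s3 - s3*s0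 - 2*(s3*sm + sm*s3) + 16*(sm*sm)) * sm) - 2 * (s0 * (s0*s3 - s3*s0 - 2*(s3*sm + sm*s3) + 16*(sm*sm))) - 8 * (sm * (s0*s3 - s3*s0 - 2*(s3*sm + sm*s3) + 16*(sm*sm))) + 8 * ((s3*sm - sm*s3 + (s0*sm + sm*s0)) * s0) - 8 * (s0 * (s3*sm - sm*s3 + (s0*sm + sm*s0))) := by noncomm_ring
  rw [z1, z2, z3, z4, z6] at key2m
  simp only [mul_zero, zero_mul, add_zero, zero_add, sub_zero, neg_zero, smul_zero, mul_one] at key2m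
  have c2m : Commute (4*(sp*sm + sm*sp) + 8*(2*(sm*s3 + s3*sm)) + 8*(s3*s3) - 8*(6*(sm*sm + sm*sm))) sm := sub_eq_zero.mp key2m
  have hC1 : s0 ^ 2 + s3 ^ 2 + (1 / 2 : ℂ) • (sp * sm + sm * sp)
      = (1/8 : ℂ) • (8*(s0*s0) + 8*(s3*s3) + 4*(sp*sm + sm*sp)) := by
    simp only [smul_add, aux_smul8, aux_smul4, pow_two]
  have hC2 : (1 / 2 : ℂ) • (sp * sm + sm * sp) + 2 * (sm * s3 + s3 * sm) + s3 ^ 2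
      - 6 * (sm * sm + sm * sm) = (1/8 : ℂ) • (4*(sp*sm + sm*sp) + 8*(2*(sm*s3 + s3*sm)) + 8*(s3*s3) - 8*(6*(sm*sm + sm*sm))) := by
    simp only [smul_sub, smul_add, aux_smul8, aux_smul4, pow_two]
  rw [hC1, hC2]
  exact ⟨⟨c10.smul_left _, c13.smul_left _, c1p.smul_left _, c1m.smul_left _⟩,
    ⟨c20.smul_left _, c23.smul_left _, c2p.smul_left _, c2m.smul_left _⟩⟩

end Generic

/-- the elements C₁ = S₀² + S₃² + ½{S₊,S₋} and
C₂ = ½{S₊,S₋} + 2{S₋,S₃} + S₃² − 6{S₋,S₋} are central in 𝔰𝔎_r. -/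
theorem stmt17 :
    let m := RingQuot.mkAlgHom ℂ Sk.Rel
    let s0 := m Sk.S0; let s3 := m Sk.S3; let sp := m Sk.Sp; let sm := m Sk.Sm
    let C₁ := s0 ^ 2 + s3 ^ 2 + (1 / 2 : ℂ) • (sp * sm + sm * sp)
    let C₂ := (1 / 2 : ℂ) • (sp * sm + sm * sp) + 2 * (sm * s3 + s3 * sm) + s3 ^ 2
      - 6 * (sm * sm + sm * sm)
    (Commute C₁ s0 ∧ Commute C₁ s3 ∧ Commute C₁ sp ∧ Commute C₁ sm) ∧
    (Commute C₂ s0 ∧ Commute C₂ s3 ∧ Commute C₂ sp ∧ Commute C₂ sm) := by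
  intro m s0 s3 sp sm C₁ C₂
  have h1 : s0*sm - sm*s0 = -(2*(sm*sm + sm*sm)) := by
    have t := RingQuot.mkAlgHom_rel ℂ Sk.Rel.r1
    simp only [Sk.com, Sk.acom, map_sub, map_mul, map_add, map_neg, map_ofNat] at t
    exact t
  have h2 : s0*sp - sp*s0 = 16*(s3*sm + sm*s3) - 16*(sm*sm + sm*sm) + 2*(sp*sm + sm*sp) - 4*(s3*s3 + s3*s3) := by
    have t := RingQuot.mkAlgHom_rel ℂ Sk.Rel.r2
    simp only [Sk.com, Sk.acom, map_sub, map_mul, map_add, map_neg, map_ofNat] at t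
    exact t
  have h3 : sp*sm - sm*sp = 2*(s0*s3 + s3*s0) := by
    have t := RingQuot.mkAlgHom_rel ℂ Sk.Rel.r3
    simp only [Sk.com, Sk.acom, map_sub, map_mul, map_add, map_neg, map_ofNat] at t
    exact t
  have h4 : s0*s3 - s3*s0 = 2*(s3*sm + sm*s3) - 8*(sm*sm + sm*sm) := by
    have t := RingQuot.mkAlgHom_rel ℂ Sk.Rel.r4
    simp only [Sk.com, Sk.acom, map_sub, map_mul, map_add, map_neg, map_ofNat] at t
    exact t
  have h5 : s3*sp - sp*s3 = s0*sp + sp*s0 := by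
    have t := RingQuot.mkAlgHom_rel ℂ Sk.Rel.r5
    simp only [Sk.com, Sk.acom, map_sub, map_mul, map_add, map_neg, map_ofNat] at t
    exact t
  have h6 : s3*sm - sm*s3 = -(s0*sm + sm*s0) := by
    have t := RingQuot.mkAlgHom_rel ℂ Sk.Rel.r6
    simp only [Sk.com, Sk.acom, map_sub, map_mul, map_add, map_neg, map_ofNat] at t
    exact t
  exact aux_main s0 s3 sp sm h1 h2 h3 h4 h5 h6
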